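/- Let 𝒫* denote the set of minimizers of the primal objective P(x) = f(x)+g(x)+h(x) and 𝒟* the set of minimizers of the dual objective D(u) = (f+g)*(−u) + h*(u). Then the set of fixed points of the generalized three operator splitting operator is the weighted Minkowski sum Fix(G_γ) = 𝒫* + γ D 𝒟* = { x + γ D u : x ∈ 𝒫*, u ∈ 𝒟* }. -/

import Mathlib

open Finset
open scoped RealInnerProductSpace

noncomputable section

variable {p : ℕ}

/-- proper, lower semicontinuous, convex extended-real function. -/
structure ProperLscConvex (g : EuclideanSpace ℝ (Fin p) → EReal) : Prop where
  proper : ∃ x, g x ≠ ⊤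
  ne_bot : ∀ x, g x ≠ ⊥
  lsc : LowerSemicontinuous g
  convex : ∀ x y : EuclideanSpace ℝ (Fin p), ∀ a b : ℝ, 0 ≤ a → 0 ≤ b → a + b = 1 →
    g (a • x + b • y) ≤ (a : EReal) * g x + (b : EReal) * g y

/-- the squared `D⁻¹`-norm for the diagonal matrix `D = diag d`. -/
def sqDinv (d : Fin p → ℝ) (v : EuclideanSpace ℝ (Fin p)) : ℝ :=
  ∑ j, (d j)⁻¹ * (v j) ^ 2

/-- `z = prox^{D⁻¹}_{γ g}(x)`. -/
def IsProxDinv (d : Fin p → ℝ) (γ : ℝ) (g : EuclideanSpace ℝ (Fin p) → EReal)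
    (x z : EuclideanSpace ℝ (Fin p)) : Prop :=
  ∀ w, g z + ((1 / (2 * γ) * sqDinv d (x - z) : ℝ) : EReal)
      ≤ g w + ((1 / (2 * γ) * sqDinv d (x - w) : ℝ) : EReal)

/-- Fenchel conjugate. -/
def fconj (g : EuclideanSpace ℝ (Fin p) → EReal) (u : EuclideanSpace ℝ (Fin p)) : EReal :=
  ⨆ x, ((⟪x, u⟫ : ℝ) : EReal) - g x

namespace TOS

variable {p : ℕ}

local notation "E" => EuclideanSpace ℝ (Fin p)

/-- auxiliary bilinear form for the `D⁻¹` metric. -/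
def bil (d : Fin p → ℝ) (v w : E) : ℝ := ∑ j, (d j)⁻¹ * (v j * w j)

lemma bil_self (d : Fin p → ℝ) (v : E) : bil d v v = sqDinv d v := by
  unfold bil sqDinv; exact Finset.sum_congr rfl fun j _ => by ring

lemma sqDinv_expand (d : Fin p → ℝ) (v w : E) (t : ℝ) :
    sqDinv d (v - t • w) = sqDinv d v - 2 * t * bil d v w + t ^ 2 * sqDinv d w := by
  unfold bil sqDinv
  rw [Finset.mul_sum, Finset.mul_sum, ← Finset.sum_sub_distrib, ← Finset.sum_add_distrib]
  refine Finset.sum_congr rfl fun j _ => ?_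
  have : (v - t • w) j = v j - t * w j := by simp [PiLp.sub_apply, PiLp.smul_apply]
  rw [this]; ring

lemma sqDinv_nonneg {d : Fin p → ℝ} (hd : ∀ j, 0 < d j) (v : E) : 0 ≤ sqDinv d v := by
  refine Finset.sum_nonneg fun j _ => ?_
  have := (hd j); positivity

lemma eq_of_sqDinv_nonpos {d : Fin p → ℝ} (hd : ∀ j, 0 < d j) {v : E}
    (h : sqDinv d v ≤ 0) : v = 0 := by
  have hz : sqDinv d v = 0 := le_antisymm h (sqDinv_nonneg hd v)
  have hall := (Finset.sum_eq_zero_iff_of_nonneg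
    (fun j _ => by have := hd j; positivity)).mp hz
  ext j
  have hj := hall j (Finset.mem_univ j)
  have h2 : (v j) ^ 2 = 0 := by
    rcases mul_eq_zero.mp hj with h' | h'
    · exact absurd h' (inv_ne_zero (hd j).ne')
    · exact h'
  have h3 : v j = 0 := by
    have := pow_eq_zero_iff (n := 2) (M₀ := ℝ) (by norm_num) |>.mp h2
    exact this
  simpa using h3

/-- the canonical subgradient vector coming from a prox computation. -/
def qvec (d : Fin p → ℝ) (γ : ℝ) (x z : E) : E := WithLp.toLp 2 (fun j => (γ * d j)⁻¹ * (x j - z j))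

lemma inner_qvec {d : Fin p → ℝ} {γ : ℝ} (hγ : γ ≠ 0) (x z v : E) :
    (⟪v, qvec d γ x z⟫ : ℝ) = γ⁻¹ * bil d (x - z) v := by
  rw [show (⟪v, qvec d γ x z⟫ : ℝ) = ∑ j, v j * qvec d γ x z j by
    simp [PiLp.inner_apply, RCLike.inner_apply, conj_trivial]
    exact Finset.sum_congr rfl fun _ _ => mul_comm _ _]
  unfold bil qvec
  simp only [WithLp.ofLp_toLp]
  rw [Finset.mul_sum]
  refine Finset.sum_congr rfl fun j _ => ?_
  have : (x - z) j = x j - z j := by simp [PiLp.sub_apply]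
  rw [this, mul_inv]
  ring

/-- subgradient inequality (global, in `EReal`). -/
def Subg (g : E → EReal) (x u : E) : Prop :=
  ∀ w, g x + ((⟪w - x, u⟫ : ℝ) : EReal) ≤ g w

lemma Subg.ne_top {g : E → EReal} {x u : E} (hs : Subg g x u) (hp : ∃ w, g w ≠ ⊤) :
    g x ≠ ⊤ := by
  obtain ⟨w, hw⟩ := hp
  intro hx
  have := hs w
  rw [hx, EReal.top_add_coe] at this
  exact hw (top_le_iff.mp this)

lemma real_of_ne {a : EReal} (h1 : a ≠ ⊤) (h2 : a ≠ ⊥) : a = ((a.toReal : ℝ) : EReal) :=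
  (EReal.coe_toReal h1 h2).symm

lemma le_of_forall_t {a b C : ℝ} (h : ∀ t : ℝ, 0 < t → t ≤ 1 → a ≤ b + C * t) : a ≤ b := by
  rcases le_or_gt C 0 with hC | hC
  · have := h 1 one_pos le_rfl; nlinarith
  · refine le_of_forall_pos_le_add fun ε hε => ?_
    have ht := h (min 1 (ε / C)) (by positivity) (min_le_left _ _)
    have : C * min 1 (ε / C) ≤ ε := by
      calc C * min 1 (ε / C) ≤ C * (ε / C) := by
            exact mul_le_mul_of_nonneg_left (min_le_right _ _) hC.le
        _ = ε := by field_simp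
    linarith

end TOS
namespace TOS
variable {p : ℕ}
local notation "E" => EuclideanSpace ℝ (Fin p)

lemma subg_of_prox {d : Fin p → ℝ} {γ : ℝ} (hγ : 0 < γ)
    {φ : E → EReal} (hφ : ProperLscConvex φ) {x z : E}
    (hprox : IsProxDinv d γ φ x z) : Subg φ z (qvec d γ x z) := by
  intro w
  by_cases hw : φ w = ⊤
  · rw [hw]; exact le_top
  have hwB := real_of_ne hw (hφ.ne_bot w)
  set B := (φ w).toReal
  have hzt : φ z ≠ ⊤ := by
    intro hz
    have h1 := hprox w
    rw [hz, EReal.top_add_coe, hwB, ← EReal.coe_add] at h1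
    exact (not_le.mpr (EReal.coe_lt_top _)) h1
  have hzA := real_of_ne hzt (hφ.ne_bot z)
  set A := (φ z).toReal
  set k := 1/(2*γ) with hk
  have h2k : 2*k = γ⁻¹ := by rw [hk]; field_simp
  set S := sqDinv d (x - z) with hS
  set T := sqDinv d (w - z) with hT
  set bl := bil d (x - z) (w - z) with hbl
  have key : A + 2*k*bl ≤ B := by
    refine le_of_forall_t (C := k*T) fun t ht0 ht1 => ?_
    set wt := z + t • (w - z) with hwt
    have hcomb : (1 - t) • z + t • w = wt := by
      rw [hwt, sub_smul, one_smul, smul_sub]; abel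
    have hconv := hφ.convex z w (1-t) t (by linarith) ht0.le (by ring)
    rw [hcomb] at hconv
    have h1 := hprox wt
    have hx : x - wt = (x - z) - t • (w - z) := by rw [hwt]; abel
    rw [hx, sqDinv_expand] at h1
    have h2 : φ z + ((k * S : ℝ) : EReal)
        ≤ (((1-t)*A + t*B : ℝ) : EReal) + ((k * (S - 2*t*bl + t^2*T) : ℝ) : EReal) := by
      refine h1.trans (add_le_add (hconv.trans ?_) le_rfl)
      rw [hzA, hwB, ← EReal.coe_mul, ← EReal.coe_mul, ← EReal.coe_add]
    rw [hzA, ← EReal.coe_add, ← EReal.coe_add, EReal.coe_le_coe_iff] at h2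
    have h3 : t*(A + 2*k*bl) ≤ t*(B + k*T*t) := by nlinarith [h2]
    have h4 := le_of_mul_le_mul_left h3 ht0
    linarith
  rw [hzA, hwB, inner_qvec hγ.ne', ← hbl, ← EReal.coe_add, EReal.coe_le_coe_iff]
  rw [← h2k]; linarith [key]

lemma prox_unique {d : Fin p → ℝ} (hd : ∀ j, 0 < d j) {γ : ℝ} (hγ : 0 < γ)
    {φ : E → EReal} (hφ : ProperLscConvex φ) {x z z' : E}
    (hsub : Subg φ z (qvec d γ x z)) (hprox : IsProxDinv d γ φ x z') : z' = z := by
  have hzt : φ z ≠ ⊤ := hsub.ne_top hφ.proper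
  have hzA := real_of_ne hzt (hφ.ne_bot z)
  set A := (φ z).toReal
  have hz't : φ z' ≠ ⊤ := by
    intro hz'
    have h1 := hprox z
    rw [hz', EReal.top_add_coe, hzA, ← EReal.coe_add] at h1
    exact (not_le.mpr (EReal.coe_lt_top _)) h1
  have hzA' := real_of_ne hz't (hφ.ne_bot z')
  set A' := (φ z').toReal
  have h1 := hprox z
  rw [hzA, hzA', ← EReal.coe_add, ← EReal.coe_add, EReal.coe_le_coe_iff] at h1
  have h2 := hsub z'
  rw [hzA, hzA', inner_qvec hγ.ne', ← EReal.coe_add, EReal.coe_le_coe_iff] at h2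
  have hx : x - z' = (x - z) - (1:ℝ) • (z' - z) := by rw [one_smul]; abel
  rw [hx, sqDinv_expand] at h1
  have hTnn := sqDinv_nonneg hd (z' - z)
  have hpos : (0:ℝ) < 1/(2*γ) := by positivity
  have e : γ⁻¹ = 2*(1/(2*γ)) := by field_simp
  rw [e] at h2
  have hT0 : sqDinv d (z' - z) ≤ 0 := by nlinarith [h1, h2, hpos]
  exact sub_eq_zero.mp (eq_of_sqDinv_nonpos hd (le_antisymm hT0 hTnn ▸ le_rfl))

end TOS
namespace TOS
variable {p : ℕ}
local notation "E" => EuclideanSpace ℝ (Fin p)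

lemma slope_tendsto {f : E → ℝ} {gf : E} (x v : E) (hf : HasGradientAt f gf x) :
    Filter.Tendsto (fun t : ℝ => (f (x + t • v) - f x) / t) (nhdsWithin 0 (Set.Ioi 0))
      (nhds (⟪gf, v⟫ : ℝ)) := by
  have hline : HasDerivAt (fun t : ℝ => x + t • v) v 0 := by
    simpa using ((hasDerivAt_id (0:ℝ)).smul_const v).const_add x
  have hcomp : HasDerivAt (fun t : ℝ => f (x + t • v)) (⟪gf, v⟫ : ℝ) 0 := by
    have hF : HasFDerivAt f ((InnerProductSpace.toDual ℝ _) gf) (x + (0:ℝ) • v) := by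
      simpa using hf.hasFDerivAt
    have h1 := hF.comp_hasDerivAt 0 hline
    simpa [InnerProductSpace.toDual_apply_apply, Function.comp_def] using h1
  have h2 := (hasDerivAt_iff_tendsto_slope.mp hcomp).mono_left
    (nhdsWithin_mono 0 (fun t ht => (Set.mem_Ioi.mp ht).ne'))
  refine Filter.Tendsto.congr' ?_ h2
  filter_upwards [self_mem_nhdsWithin] with t _
  simp [slope, zero_smul, div_eq_inv_mul, smul_eq_mul]

lemma grad_ineq {f : E → ℝ} (hfconv : ConvexOn ℝ Set.univ f) {gf : E} {x : E}
    (hfdiff : HasGradientAt f gf x) (w : E) :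
    f x + ⟪gf, w - x⟫ ≤ f w := by
  have hT := slope_tendsto x (w - x) hfdiff
  have hev : ∀ᶠ t in nhdsWithin (0:ℝ) (Set.Ioi 0),
      (f (x + t • (w - x)) - f x) / t ≤ f w - f x := by
    filter_upwards [Ioc_mem_nhdsGT_of_mem (Set.left_mem_Ico.mpr one_pos)] with t ht
    obtain ⟨ht0, ht1⟩ := ht
    have hcomb : x + t • (w - x) = (1 - t) • x + t • w := by
      rw [sub_smul, one_smul, smul_sub]; abel
    have hc := hfconv.2 (Set.mem_univ x) (Set.mem_univ w)
      (by linarith : (0:ℝ) ≤ 1 - t) ht0.le (by ring)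
    rw [← hcomb] at hc
    simp only [smul_eq_mul] at hc
    rw [div_le_iff₀ ht0]
    nlinarith [hc]
  linarith [le_of_tendsto hT hev]

lemma term_le_fconj (g : E → EReal) (u w : E) :
    ((⟪w, u⟫ : ℝ) : EReal) - g w ≤ fconj g u :=
  le_iSup (fun x => ((⟪x, u⟫ : ℝ) : EReal) - g x) w

lemma fconj_eq_of_subg {g : E → EReal} (hg : ∀ y, g y ≠ ⊥) {x u : E}
    (hsub : Subg g x u) (hxt : g x ≠ ⊤) :
    fconj g u = ((⟪x, u⟫ : ℝ) : EReal) - g x := by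
  have hxA := real_of_ne hxt (hg x)
  set A := (g x).toReal
  refine le_antisymm (iSup_le fun w => ?_) (term_le_fconj g u x)
  by_cases hw : g w = ⊤
  · rw [hw, EReal.sub_top]; exact bot_le
  have hwB := real_of_ne hw (hg w)
  set B := (g w).toReal
  have h2 := hsub w
  rw [hxA, hwB, ← EReal.coe_add, EReal.coe_le_coe_iff] at h2
  rw [hxA, hwB, ← EReal.coe_sub, ← EReal.coe_sub, EReal.coe_le_coe_iff]
  have hi : (⟪w - x, u⟫ : ℝ) = ⟪w, u⟫ - ⟪x, u⟫ := by rw [inner_sub_left]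
  linarith [h2, hi.le, hi.ge]

lemma subg_of_fconj_le {g : E → EReal} (hg : ∀ y, g y ≠ ⊥) {x u : E} {A : ℝ}
    (hxA : g x = (A : EReal)) (hle : fconj g u ≤ ((⟪x, u⟫ : ℝ) : EReal) - g x) :
    Subg g x u := by
  intro w
  by_cases hw : g w = ⊤
  · rw [hw]; exact le_top
  have hwB := real_of_ne hw (hg w)
  set B := (g w).toReal
  have h1 := (term_le_fconj g u w).trans hle
  rw [hxA, hwB, ← EReal.coe_sub, ← EReal.coe_sub, EReal.coe_le_coe_iff] at h1
  rw [hxA, hwB, ← EReal.coe_add, EReal.coe_le_coe_iff]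
  have hi : (⟪w - x, u⟫ : ℝ) = ⟪w, u⟫ - ⟪x, u⟫ := by rw [inner_sub_left]
  linarith [h1, hi.le, hi.ge]

lemma weak_duality {f : E → ℝ} {g h : E → EReal} (hg : ∀ y, g y ≠ ⊥)
    (hh : ∀ y, h y ≠ ⊥) (x u : E) :
    -(((f x : ℝ) : EReal) + g x + h x)
      ≤ fconj (fun y => ((f y : ℝ) : EReal) + g y) (-u) + fconj h u := by
  by_cases hgx : g x = ⊤
  · have e : ((f x : ℝ) : EReal) + g x + h x = ⊤ := by
      rw [hgx, EReal.coe_add_top]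
      exact EReal.top_add_of_ne_bot (hh x)
    rw [e, EReal.neg_top]; exact bot_le
  by_cases hhx : h x = ⊤
  · have e : ((f x : ℝ) : EReal) + g x + h x = ⊤ := by
      rw [hhx]
      refine EReal.add_top_of_ne_bot ?_
      rw [Ne, EReal.add_eq_bot_iff]
      push_neg
      exact ⟨EReal.coe_ne_bot _, hg x⟩
    rw [e, EReal.neg_top]; exact bot_le
  have hgA := real_of_ne hgx (hg x)
  have hhB := real_of_ne hhx (hh x)
  set A := (g x).toReal
  set B := (h x).toReal
  have t1 : ((⟪x, -u⟫ : ℝ) : EReal) - (((f x : ℝ) : EReal) + g x)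
      ≤ fconj (fun y => ((f y : ℝ) : EReal) + g y) (-u) :=
    term_le_fconj (fun y => ((f y : ℝ) : EReal) + g y) (-u) x
  have t2 : ((⟪x, u⟫ : ℝ) : EReal) - h x ≤ fconj h u := term_le_fconj h u x
  have hin : (⟪x, -u⟫ : ℝ) = -⟪x, u⟫ := by rw [inner_neg_right]
  calc -(((f x : ℝ) : EReal) + g x + h x)
      = ((-(f x + A + B) : ℝ) : EReal) := by
        rw [hgA, hhB, ← EReal.coe_add, ← EReal.coe_add, ← EReal.coe_neg]
    _ = ((⟪x, -u⟫ - (f x + A) + (⟪x, u⟫ - B) : ℝ) : EReal) := by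
        congr 1; rw [hin]; ring
    _ = ((⟪x, -u⟫ - (f x + A) : ℝ) : EReal) + ((⟪x, u⟫ - B : ℝ) : EReal) := by
        rw [← EReal.coe_add]
    _ ≤ _ := by
        refine add_le_add (le_trans (le_of_eq ?_) t1) (le_trans (le_of_eq ?_) t2)
        · rw [hgA, ← EReal.coe_add, ← EReal.coe_sub]
        · rw [hhB, ← EReal.coe_sub]

end TOS
namespace TOS
variable {p : ℕ}
local notation "E" => EuclideanSpace ℝ (Fin p)

lemma F_ne_bot {f : E → ℝ} {g : E → EReal} (hg : ∀ y, g y ≠ ⊥) :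
    ∀ y, ((f y : ℝ) : EReal) + g y ≠ ⊥ := fun y => by
  rw [Ne, EReal.add_eq_bot_iff]; push_neg
  exact ⟨EReal.coe_ne_bot _, hg y⟩

lemma subg_sub_grad {f : E → ℝ} {gradf : E → E}
    (hfdiff : ∀ y, HasGradientAt f (gradf y) y) {g : E → EReal} (hg : ProperLscConvex g)
    {x s : E} (hsub : Subg (fun y => ((f y : ℝ) : EReal) + g y) x s) (hxt : g x ≠ ⊤) :
    Subg g x (s - gradf x) := by
  have hxA := real_of_ne hxt (hg.ne_bot x)
  set A := (g x).toReal
  intro w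
  by_cases hw : g w = ⊤
  · rw [hw]; exact le_top
  have hwB := real_of_ne hw (hg.ne_bot w)
  set B := (g w).toReal
  have hT := slope_tendsto x (w - x) (hfdiff x)
  have hev : ∀ᶠ t in nhdsWithin (0:ℝ) (Set.Ioi 0),
      A + ⟪w - x, s⟫ - B ≤ (f (x + t • (w - x)) - f x) / t := by
    filter_upwards [Ioc_mem_nhdsGT_of_mem (Set.left_mem_Ico.mpr one_pos)] with t ht
    obtain ⟨ht0, ht1⟩ := ht
    set wt := x + t • (w - x) with hwt
    have hcomb : (1 - t) • x + t • w = wt := by rw [hwt, sub_smul, one_smul, smul_sub]; abel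
    have hgc := hg.convex x w (1-t) t (by linarith) ht0.le (by ring)
    rw [hcomb] at hgc
    have hgc' : g wt ≤ (((1-t)*A + t*B : ℝ) : EReal) := by
      refine hgc.trans (le_of_eq ?_)
      rw [hxA, hwB, ← EReal.coe_mul, ← EReal.coe_mul, ← EReal.coe_add]
    have h1 := hsub wt
    simp only [] at h1
    have hsw : wt - x = t • (w - x) := by rw [hwt]; abel
    have hiw : (⟪wt - x, s⟫ : ℝ) = t * ⟪w - x, s⟫ := by
      rw [hsw, real_inner_smul_left]
    rw [hxA, hiw] at h1
    have h2 := h1.trans (add_le_add le_rfl hgc')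
    rw [← EReal.coe_add, ← EReal.coe_add, ← EReal.coe_add, EReal.coe_le_coe_iff] at h2
    rw [le_div_iff₀ ht0]
    nlinarith [h2]
  have hlim := ge_of_tendsto hT hev
  rw [hxA, hwB, ← EReal.coe_add, EReal.coe_le_coe_iff]
  have hi : (⟪w - x, s - gradf x⟫ : ℝ) = ⟪w - x, s⟫ - ⟪w - x, gradf x⟫ := by
    rw [inner_sub_right]
  have hc : (⟪gradf x, w - x⟫ : ℝ) = ⟪w - x, gradf x⟫ := real_inner_comm _ _
  linarith [hlim, hi.le, hi.ge, hc.le, hc.ge]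

lemma subg_add_grad {f : E → ℝ} (hfconv : ConvexOn ℝ Set.univ f) {gradf : E → E}
    (hfdiff : ∀ y, HasGradientAt f (gradf y) y) {g : E → EReal}
    {x s : E} (hsub : Subg g x s) :
    Subg (fun y => ((f y : ℝ) : EReal) + g y) x (s + gradf x) := by
  intro w
  have h1 := hsub w
  have h2 := grad_ineq hfconv (hfdiff x) w
  have hi : (⟪w - x, s + gradf x⟫ : ℝ) = ⟪w - x, s⟫ + ⟪gradf x, w - x⟫ := by
    rw [inner_add_right, real_inner_comm (w - x) (gradf x)]
  calc ((f x : ℝ) : EReal) + g x + ((⟪w - x, s + gradf x⟫ : ℝ) : EReal)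
      = ((f x + ⟪gradf x, w - x⟫ : ℝ) : EReal) + (g x + ((⟪w - x, s⟫ : ℝ) : EReal)) := by
        rw [hi, EReal.coe_add, EReal.coe_add]; abel
    _ ≤ ((f w : ℝ) : EReal) + g w :=
        add_le_add (EReal.coe_le_coe_iff.mpr h2) h1

lemma pair_optimal {f : E → ℝ} (hfconv : ConvexOn ℝ Set.univ f) {gradf : E → E}
    (hfdiff : ∀ y, HasGradientAt f (gradf y) y)
    {g h : E → EReal} (hg : ProperLscConvex g) (hh : ProperLscConvex h)
    {z u : E} (hsh : Subg h z u) (hsg : Subg g z (-u - gradf z)) :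
    (∀ x', ((f z : ℝ) : EReal) + g z + h z ≤ ((f x' : ℝ) : EReal) + g x' + h x') ∧
    (∀ u', fconj (fun y => ((f y : ℝ) : EReal) + g y) (-u) + fconj h u
         ≤ fconj (fun y => ((f y : ℝ) : EReal) + g y) (-u') + fconj h u') := by
  have hFsub : Subg (fun y => ((f y : ℝ) : EReal) + g y) z (-u) := by
    have := subg_add_grad hfconv hfdiff hsg
    rwa [sub_add_cancel] at this
  have hht : h z ≠ ⊤ := hsh.ne_top hh.proper
  have hgt : g z ≠ ⊤ := hsg.ne_top hg.proper
  have hgA := real_of_ne hgt (hg.ne_bot z)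
  have hhB := real_of_ne hht (hh.ne_bot z)
  set A := (g z).toReal
  set B := (h z).toReal
  have hFt : ((f z : ℝ) : EReal) + g z ≠ ⊤ := by
    rw [hgA, ← EReal.coe_add]; exact EReal.coe_ne_top _
  have FY1 := fconj_eq_of_subg (F_ne_bot hg.ne_bot) hFsub hFt
  have FY2 := fconj_eq_of_subg hh.ne_bot hsh hht
  have hin : (⟪z, -u⟫ : ℝ) = -⟪z, u⟫ := by rw [inner_neg_right]
  have Dval : fconj (fun y => ((f y : ℝ) : EReal) + g y) (-u) + fconj h u
      = ((-(f z + A + B) : ℝ) : EReal) := by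
    rw [FY1, FY2, hgA, hhB, ← EReal.coe_add, ← EReal.coe_sub, ← EReal.coe_sub,
      ← EReal.coe_add]
    congr 1; rw [hin]; ring
  constructor
  · intro x'
    by_cases hx' : ((f x' : ℝ) : EReal) + g x' + h x' = ⊤
    · rw [hx']; exact le_top
    have hgx' : g x' ≠ ⊤ := by
      intro hc
      apply hx'
      rw [hc, EReal.coe_add_top]
      exact EReal.top_add_of_ne_bot (hh.ne_bot x')
    have hhx' : h x' ≠ ⊤ := by
      intro hc
      apply hx'
      rw [hc]
      refine EReal.add_top_of_ne_bot (F_ne_bot hg.ne_bot x')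
    have hgA' := real_of_ne hgx' (hg.ne_bot x')
    have hhB' := real_of_ne hhx' (hh.ne_bot x')
    have hw := weak_duality (f := f) hg.ne_bot hh.ne_bot x' u
    rw [Dval, hgA', hhB', ← EReal.coe_add, ← EReal.coe_add, ← EReal.coe_neg,
      EReal.coe_le_coe_iff] at hw
    rw [hgA, hhB, hgA', hhB', ← EReal.coe_add, ← EReal.coe_add, ← EReal.coe_add,
      ← EReal.coe_add, EReal.coe_le_coe_iff]
    linarith [hw]
  · intro u'
    have hw := weak_duality (f := f) hg.ne_bot hh.ne_bot z u'
    rw [hgA, hhB, ← EReal.coe_add, ← EReal.coe_add, ← EReal.coe_neg] at hw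
    exact (le_of_eq Dval).trans hw

end TOS
namespace TOS
variable {p : ℕ}
local notation "E" => EuclideanSpace ℝ (Fin p)

lemma intrinsic_ball {s : Set E} {xb : E} (hx : xb ∈ intrinsicInterior ℝ s) :
    ∃ ε > 0, ∀ v : E, v ∈ (affineSpan ℝ s).direction → ‖v‖ < ε → xb + v ∈ s := by
  rw [intrinsicInterior] at hx
  obtain ⟨y, hy, hyx⟩ := hx
  rw [mem_interior_iff_mem_nhds, Metric.mem_nhds_iff] at hy
  obtain ⟨ε, hε, hball⟩ := hy
  refine ⟨ε, hε, fun v hv hvn => ?_⟩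
  have hyA : (y : E) ∈ affineSpan ℝ s := y.2
  have hmem : v +ᵥ (y : E) ∈ affineSpan ℝ s :=
    AffineSubspace.vadd_mem_of_mem_direction hv hyA
  have hz : (⟨v +ᵥ (y : E), hmem⟩ : affineSpan ℝ s) ∈ Metric.ball y ε := by
    rw [Metric.mem_ball, Subtype.dist_eq]
    simpa [dist_eq_norm] using hvn
  have := hball hz
  rw [Set.mem_preimage] at this
  simpa [hyx.symm, add_comm] using this

lemma ereal_real_le {x : EReal} {M : ℝ} (hle : x ≤ (M : EReal)) (hb : x ≠ ⊥) :
    x = ((x.toReal : ℝ) : EReal) ∧ x.toReal ≤ M := by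
  have ht : x ≠ ⊤ := (hle.trans_lt (EReal.coe_lt_top M)).ne
  refine ⟨real_of_ne ht hb, ?_⟩
  have := EReal.toReal_le_toReal hle hb (EReal.coe_ne_top M)
  simpa using this

lemma centroid_bound {g : E → EReal}
    (hconv : ∀ x y : E, ∀ a b : ℝ, 0 ≤ a → 0 ≤ b → a + b = 1 →
      g (a • x + b • y) ≤ (a : EReal) * g x + (b : EReal) * g y)
    (hnb : ∀ x, g x ≠ ⊥) {M : ℝ} :
    ∀ (n : ℕ) (y : Fin n → E), 0 < n → (∀ i, g (y i) ≤ (M : EReal)) →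
      g ((n : ℝ)⁻¹ • ∑ i, y i) ≤ (M : EReal) := by
  intro n
  induction n with
  | zero => intro y hn; exact absurd hn (lt_irrefl 0)
  | succ n ih =>
    intro y _ hy
    rcases Nat.eq_zero_or_pos n with hn0 | hn0
    · subst hn0
      simpa [Fin.sum_univ_one] using hy 0
    · have hnpos : (0:ℝ) < n := by exact_mod_cast hn0
      have hn1pos : (0:ℝ) < (n:ℝ) + 1 := by linarith
      set c : ℝ := ((n:ℝ) + 1)⁻¹ with hc
      set S : E := ∑ i : Fin n, y i.castSucc with hS
      have hsum : ∑ i : Fin (n+1), y i = S + y (Fin.last n) := Fin.sum_univ_castSucc y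
      have ihb := ih (fun i => y i.castSucc) hn0 (fun i => hy _)
      set a : ℝ := (n:ℝ) * c with ha
      have hac : 0 ≤ a := by positivity
      have hcpos : 0 < c := by positivity
      have habs : a + c = 1 := by rw [ha, hc]; field_simp
      have hdecomp : ((n:ℝ)+1)⁻¹ • ∑ i : Fin (n+1), y i
          = a • ((n:ℝ)⁻¹ • S) + c • y (Fin.last n) := by
        rw [hsum, smul_add, smul_smul, ← hc]
        congr 2
        rw [ha]; field_simp
      have hcv := hconv ((n:ℝ)⁻¹ • S) (y (Fin.last n)) a c hac hcpos.le habs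
      rw [← hdecomp] at hcv
      obtain ⟨e1, l1⟩ := ereal_real_le ihb (hnb _)
      obtain ⟨e2, l2⟩ := ereal_real_le (hy (Fin.last n)) (hnb _)
      rw [show ((n+1:ℕ):ℝ)⁻¹ = ((n:ℝ)+1)⁻¹ by push_cast; ring]
      refine hcv.trans ?_
      rw [e1, e2, ← EReal.coe_mul, ← EReal.coe_mul, ← EReal.coe_add, EReal.coe_le_coe_iff]
      have hM : a*M + c*M = M := by rw [← add_mul, habs, one_mul]
      linarith [mul_le_mul_of_nonneg_left l1 hac, mul_le_mul_of_nonneg_left l2 hcpos.le, hM]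

lemma segment_bound {g : E → EReal}
    (hconv : ∀ x y : E, ∀ a b : ℝ, 0 ≤ a → 0 ≤ b → a + b = 1 →
      g (a • x + b • y) ≤ (a : EReal) * g x + (b : EReal) * g y)
    (hnb : ∀ x, g x ≠ ⊥) {xb w : E} {s s0 M : ℝ}
    (hs0 : 0 < s0) (hs : |s| ≤ s0)
    (h1 : g (xb + s0 • w) ≤ (M : EReal)) (h2 : g (xb - s0 • w) ≤ (M : EReal)) :
    g (xb + s • w) ≤ (M : EReal) := by
  obtain ⟨hsl, hsr⟩ := abs_le.mp hs
  set a : ℝ := (1 + s / s0) / 2 with ha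
  set b : ℝ := (1 - s / s0) / 2 with hb
  have hd1 : s / s0 ≤ 1 := (div_le_one hs0).mpr hsr
  have hd2 : -1 ≤ s / s0 := by rw [neg_le, ← neg_div]; exact (div_le_one hs0).mpr (by linarith)
  have hA : 0 ≤ a := by rw [ha]; linarith
  have hB : 0 ≤ b := by rw [hb]; linarith
  have hAB : a + b = 1 := by rw [ha, hb]; ring
  have hkey : (a - b) * s0 = s := by
    rw [ha, hb]
    field_simp
    ring
  have hdecomp : xb + s • w = a • (xb + s0 • w) + b • (xb - s0 • w) := by
    rw [smul_add, smul_sub, smul_smul, smul_smul]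
    rw [show a * s0 = s + b * s0 by nlinarith [hkey]]
    rw [add_smul]
    module
  have hcv := hconv (xb + s0 • w) (xb - s0 • w) a b hA hB hAB
  rw [← hdecomp] at hcv
  obtain ⟨e1, l1⟩ := ereal_real_le h1 (hnb _)
  obtain ⟨e2, l2⟩ := ereal_real_le h2 (hnb _)
  refine hcv.trans ?_
  rw [e1, e2, ← EReal.coe_mul, ← EReal.coe_mul, ← EReal.coe_add, EReal.coe_le_coe_iff]
  have hM : a*M + b*M = M := by rw [← add_mul, hAB, one_mul]
  linarith [mul_le_mul_of_nonneg_left l1 hA, mul_le_mul_of_nonneg_left l2 hB, hM]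

end TOS
namespace TOS
variable {p : ℕ}
local notation "E" => EuclideanSpace ℝ (Fin p)

lemma bound_near_intrinsic {g : E → EReal} (hpc : ProperLscConvex g) {xb : E}
    (hx : xb ∈ intrinsicInterior ℝ {x | g x ≠ ⊤}) :
    ∃ ε > 0, ∃ M : ℝ, ∀ v : E, v ∈ (affineSpan ℝ {x | g x ≠ ⊤}).direction → ‖v‖ < ε →
      g (xb + v) ≤ (M : EReal) := by
  obtain ⟨ε0, hε0, hdom⟩ := intrinsic_ball hx
  set N := (affineSpan ℝ {x | g x ≠ ⊤}).direction with hN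
  obtain ⟨n, hnb⟩ : ∃ n : ℕ, Nonempty (Module.Basis (Fin n) ℝ ↥N) :=
    ⟨_, ⟨Module.finBasis ℝ ↥N⟩⟩
  obtain ⟨b⟩ := hnb
  set C : ℝ := 1 + ∑ i, ‖LinearMap.toContinuousLinearMap (b.coord i)‖ with hC
  have hCpos : 0 < C := by
    have : (0:ℝ) ≤ ∑ i, ‖LinearMap.toContinuousLinearMap (b.coord i)‖ :=
      Finset.sum_nonneg fun i _ => ContinuousLinearMap.opNorm_nonneg _
    linarith
  have hcoordb : ∀ (v : ↥N) (i : Fin n), |b.repr v i| ≤ C * ‖v‖ := by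
    intro v i
    have h0 : (LinearMap.toContinuousLinearMap (b.coord i)) v = b.repr v i := by
      simp [LinearMap.coe_toContinuousLinearMap', Module.Basis.coord_apply]
    have h1 := (LinearMap.toContinuousLinearMap (b.coord i)).le_opNorm v
    rw [h0] at h1
    have h2 : ‖LinearMap.toContinuousLinearMap (b.coord i)‖ ≤ C := by
      rw [hC]
      have := Finset.single_le_sum
        (f := fun i => ‖LinearMap.toContinuousLinearMap (b.coord i)‖)
        (fun i _ => ContinuousLinearMap.opNorm_nonneg _) (Finset.mem_univ i)
      linarith
    calc |b.repr v i| ≤ ‖LinearMap.toContinuousLinearMap (b.coord i)‖ * ‖v‖ := by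
          simpa [Real.norm_eq_abs] using h1
      _ ≤ C * ‖v‖ := mul_le_mul_of_nonneg_right h2 (norm_nonneg v)
  set K : ℝ := 1 + ∑ i, ‖(b i : E)‖ with hK
  have hKpos : 0 < K := by
    have : (0:ℝ) ≤ ∑ i, ‖(b i : E)‖ := Finset.sum_nonneg fun i _ => norm_nonneg _
    linarith
  have hbK : ∀ i, ‖(b i : E)‖ < K := by
    intro i
    rw [hK]
    have := Finset.single_le_sum (f := fun i => ‖(b i : E)‖)
      (fun i _ => norm_nonneg _) (Finset.mem_univ i)
    linarith
  set s0 : ℝ := ε0 / (2 * K) with hs0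
  have hs0pos : 0 < s0 := by positivity
  have hcornermem : ∀ (i : Fin n) (σ : ℝ), |σ| ≤ s0 → xb + σ • (b i : E) ∈ {x | g x ≠ ⊤} := by
    intro i σ hσ
    refine hdom _ (N.smul_mem σ (b i).2) ?_
    rw [norm_smul, Real.norm_eq_abs]
    calc |σ| * ‖(b i : E)‖ ≤ s0 * ‖(b i : E)‖ :=
          mul_le_mul_of_nonneg_right hσ (norm_nonneg _)
      _ ≤ s0 * K := mul_le_mul_of_nonneg_left (hbK i).le hs0pos.le
      _ = ε0 / 2 := by rw [hs0]; field_simp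
      _ < ε0 := by linarith
  have hxbdom : g xb ≠ ⊤ := intrinsicInterior_subset hx
  set M : ℝ := |(g xb).toReal| +
      ∑ i, (|(g (xb + s0 • (b i : E))).toReal| + |(g (xb - s0 • (b i : E))).toReal|) with hM
  have habs_nonneg : (0:ℝ) ≤ ∑ i,
      (|(g (xb + s0 • (b i : E))).toReal| + |(g (xb - s0 • (b i : E))).toReal|) :=
    Finset.sum_nonneg fun i _ => by positivity
  have hMxb : g xb ≤ (M : EReal) := by
    rw [real_of_ne hxbdom (hpc.ne_bot xb), EReal.coe_le_coe_iff, hM]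
    have := le_abs_self (g xb).toReal
    linarith
  have hMcorner : ∀ (i : Fin n) (σ : ℝ), σ = s0 ∨ σ = -s0 →
      g (xb + σ • (b i : E)) ≤ (M : EReal) := by
    intro i σ hσ
    have hmem : g (xb + σ • (b i : E)) ≠ ⊤ := by
      refine hcornermem i σ ?_
      rcases hσ with h | h <;> rw [h] <;> simp [abs_of_nonneg hs0pos.le, abs_neg]
    rw [real_of_ne hmem (hpc.ne_bot _), EReal.coe_le_coe_iff, hM]
    have hsingle : |(g (xb + s0 • (b i : E))).toReal| + |(g (xb - s0 • (b i : E))).toReal|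
        ≤ ∑ i, (|(g (xb + s0 • (b i : E))).toReal| + |(g (xb - s0 • (b i : E))).toReal|) :=
      Finset.single_le_sum
      (f := fun i => |(g (xb + s0 • (b i : E))).toReal| + |(g (xb - s0 • (b i : E))).toReal|)
      (fun i _ => by positivity) (Finset.mem_univ i)
    have habs0 : (0:ℝ) ≤ |(g xb).toReal| := abs_nonneg _
    rcases hσ with h | h
    · subst h
      have := le_abs_self (g (xb + s0 • (b i : E))).toReal
      have h2 := abs_nonneg (g (xb - s0 • (b i : E))).toReal
      linarith
    · subst h
      have heq : xb + (-s0) • (b i : E) = xb - s0 • (b i : E) := by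
        rw [neg_smul]; abel
      rw [heq]
      have := le_abs_self (g (xb - s0 • (b i : E))).toReal
      have h2 := abs_nonneg (g (xb + s0 • (b i : E))).toReal
      linarith
  set δ : ℝ := s0 / (n + 1) with hδ
  have hδpos : 0 < δ := by positivity
  refine ⟨δ / C, by positivity, M, fun v hv hvn => ?_⟩
  set vv : ↥N := ⟨v, hv⟩ with hvv
  set t : Fin n → ℝ := fun i => b.repr vv i with ht
  have htb : ∀ i, |t i| ≤ δ := by
    intro i
    have h1 := hcoordb vv i
    have h2 : ‖vv‖ = ‖v‖ := rfl
    rw [h2] at h1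
    have : C * ‖v‖ ≤ C * (δ / C) := mul_le_mul_of_nonneg_left hvn.le hCpos.le
    rw [mul_div_cancel₀ _ hCpos.ne'] at this
    exact (h1.trans this)
  set y : Fin (n+1) → E := Fin.snoc (fun i : Fin n => xb + (((n:ℝ)+1) * t i) • (b i : E)) xb
    with hy
  have hybound : ∀ i : Fin (n+1), g (y i) ≤ (M : EReal) := by
    intro i
    refine Fin.lastCases ?_ (fun i => ?_) i
    · rw [hy]; simpa [Fin.snoc_last] using hMxb
    · rw [hy]
      simp only [Fin.snoc_castSucc]
      refine segment_bound hpc.convex hpc.ne_bot hs0pos ?_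
        (hMcorner i s0 (Or.inl rfl)) ?_
      · rw [abs_mul]
        have h1 : |(n:ℝ)+1| = (n:ℝ)+1 := abs_of_pos (by positivity)
        rw [h1]
        calc ((n:ℝ)+1) * |t i| ≤ ((n:ℝ)+1) * δ :=
              mul_le_mul_of_nonneg_left (htb i) (by positivity)
          _ = s0 := by rw [hδ]; field_simp
      · have heq : xb - s0 • (b i : E) = xb + (-s0) • (b i : E) := by
          rw [neg_smul]; abel
        rw [heq]
        exact hMcorner i (-s0) (Or.inr rfl)
  have hcent := centroid_bound hpc.convex hpc.ne_bot (n+1) y (Nat.succ_pos n) hybound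
  have hveq : v = ∑ i : Fin n, t i • (b i : E) := by
    have h1 := b.sum_repr vv
    have h2 := congrArg (N.subtype) h1
    simp only [map_sum, map_smul] at h2
    exact h2.symm
  have hsum : ∑ i : Fin (n+1), y i = ((n:ℝ)+1) • (xb + v) := by
    rw [Fin.sum_univ_castSucc]
    have hcs : ∀ i : Fin n, y i.castSucc = xb + (((n:ℝ)+1) * t i) • (b i : E) := by
      intro i; rw [hy]; simp [Fin.snoc_castSucc]
    have hlast : y (Fin.last n) = xb := by rw [hy]; simp [Fin.snoc_last]
    calc ∑ i : Fin n, y i.castSucc + y (Fin.last n)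
        = ∑ i : Fin n, (xb + (((n:ℝ)+1) * t i) • (b i : E)) + xb := by
          rw [hlast]; congr 1; exact Finset.sum_congr rfl fun i _ => hcs i
      _ = (n • xb + ((n:ℝ)+1) • ∑ i : Fin n, t i • (b i : E)) + xb := by
          rw [Finset.sum_add_distrib, Finset.sum_const, Finset.card_univ, Fintype.card_fin,
            Finset.smul_sum]
          congr 2
          exact Finset.sum_congr rfl fun i _ => by rw [smul_smul]
      _ = ((n:ℝ)+1) • (xb + v) := by
          rw [hveq, ← Nat.cast_smul_eq_nsmul ℝ n xb]
          module
  rw [show (((n+1:ℕ)):ℝ)⁻¹ = ((n:ℝ)+1)⁻¹ by push_cast; ring, hsum,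
    inv_smul_smul₀ (by positivity : ((n:ℝ)+1) ≠ 0)] at hcent
  exact hcent

end TOS
namespace TOS
variable {p : ℕ}
local notation "E" => EuclideanSpace ℝ (Fin p)

lemma ereal_add_real_le {a : EReal} {c m : ℝ} (hle : a + (c : EReal) ≤ (m : EReal)) :
    a ≤ ((m - c : ℝ) : EReal) := by
  induction a using EReal.rec with
  | bot => exact bot_le
  | coe r =>
    rw [← EReal.coe_add, EReal.coe_le_coe_iff] at hle
    rw [EReal.coe_le_coe_iff]; linarith
  | top =>
    rw [EReal.top_add_coe] at hle
    exact absurd hle (not_le.mpr (EReal.coe_lt_top m))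

set_option maxHeartbeats 2000000 in
lemma exists_dual_minorant {f : E → ℝ} (hfconv : ConvexOn ℝ Set.univ f) {gradf : E → E}
    (hfdiff : ∀ y, HasGradientAt f (gradf y) y)
    {g h : E → EReal} (hg : ProperLscConvex g) (hh : ProperLscConvex h)
    (hqual : (intrinsicInterior ℝ {x | g x ≠ ⊤} ∩ intrinsicInterior ℝ {x | h x ≠ ⊤}).Nonempty)
    {minP : ℝ} (hmin : ∀ x', (minP : EReal) ≤ ((f x' : ℝ) : EReal) + g x' + h x') :
    ∃ u' : E, ∀ x w : E,
      ((minP + ⟪w - x, u'⟫ : ℝ) : EReal) ≤ ((f x : ℝ) : EReal) + g x + h w := by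
  obtain ⟨xb, hxg, hxh⟩ := hqual
  set Ng := (affineSpan ℝ {x | g x ≠ ⊤}).direction with hNg
  set Nh := (affineSpan ℝ {x | h x ≠ ⊤}).direction with hNh
  obtain ⟨εg, hεg, Mg, hMg⟩ := bound_near_intrinsic hg hxg
  obtain ⟨εh, hεh, Mh, hMh⟩ := bound_near_intrinsic hh hxh
  have hfc : ContinuousAt f xb := (hfdiff xb).differentiableAt.continuousAt
  obtain ⟨εf, hεf, hfb⟩ : ∃ εf > 0, ∀ v : E, ‖v‖ < εf → f (xb + v) ≤ f xb + 1 := by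
    obtain ⟨δ, hδ, hδf⟩ := Metric.continuousAt_iff.mp hfc 1 one_pos
    refine ⟨δ, hδ, fun v hv => ?_⟩
    have h1 : dist (xb + v) xb < δ := by simpa [dist_eq_norm] using hv
    have h2 := hδf h1
    rw [Real.dist_eq] at h2
    linarith [(abs_lt.mp h2).2]
  set V := Ng ⊔ Nh with hV
  obtain ⟨n, hbn⟩ : ∃ n : ℕ, Nonempty (Module.Basis (Fin n) ℝ ↥V) := ⟨_, ⟨Module.finBasis ℝ ↥V⟩⟩
  obtain ⟨b⟩ := hbn
  have hdec : ∀ i : Fin n, ∃ gv hv : E, gv ∈ Ng ∧ hv ∈ Nh ∧ (b i : E) = hv - gv := by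
    intro i
    have hmem : ((b i : E)) ∈ Ng ⊔ Nh := by rw [← hV]; exact (b i).2
    rw [Submodule.mem_sup] at hmem
    obtain ⟨a, ha, c, hc, hac⟩ := hmem
    exact ⟨-a, c, Ng.neg_mem ha, hc, by rw [← hac]; abel⟩
  choose gvec hvec hgvec hhvec hbvec using hdec
  -- coordinate bound
  set C : ℝ := 1 + ∑ i, ‖LinearMap.toContinuousLinearMap (b.coord i)‖ with hC
  have hCpos : 0 < C := by
    have : (0:ℝ) ≤ ∑ i, ‖LinearMap.toContinuousLinearMap (b.coord i)‖ :=
      Finset.sum_nonneg fun i _ => ContinuousLinearMap.opNorm_nonneg _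
    linarith
  have hcoordb : ∀ (v : ↥V) (i : Fin n), |b.repr v i| ≤ C * ‖v‖ := by
    intro v i
    have h0 : (LinearMap.toContinuousLinearMap (b.coord i)) v = b.repr v i := by
      simp [LinearMap.coe_toContinuousLinearMap', Module.Basis.coord_apply]
    have h1 := (LinearMap.toContinuousLinearMap (b.coord i)).le_opNorm v
    rw [h0] at h1
    have h2 : ‖LinearMap.toContinuousLinearMap (b.coord i)‖ ≤ C := by
      rw [hC]
      have := Finset.single_le_sum
        (f := fun i => ‖LinearMap.toContinuousLinearMap (b.coord i)‖)
        (fun i _ => ContinuousLinearMap.opNorm_nonneg _) (Finset.mem_univ i)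
      linarith
    calc |b.repr v i| ≤ ‖LinearMap.toContinuousLinearMap (b.coord i)‖ * ‖v‖ := by
          simpa [Real.norm_eq_abs] using h1
      _ ≤ C * ‖v‖ := mul_le_mul_of_nonneg_right h2 (norm_nonneg v)
  set Kg : ℝ := 1 + ∑ i, ‖gvec i‖ with hKg
  set Kh : ℝ := 1 + ∑ i, ‖hvec i‖ with hKh
  have hKgpos : 0 < Kg := by
    have : (0:ℝ) ≤ ∑ i, ‖gvec i‖ := Finset.sum_nonneg fun i _ => norm_nonneg _
    linarith
  have hKhpos : 0 < Kh := by
    have : (0:ℝ) ≤ ∑ i, ‖hvec i‖ := Finset.sum_nonneg fun i _ => norm_nonneg _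
    linarith
  set εgf : ℝ := min εg εf with hεgf
  have hεgfpos : 0 < εgf := lt_min hεg hεf
  set δ : ℝ := min (εgf / (2 * Kg)) (εh / (2 * Kh)) with hδ
  have hδpos : 0 < δ := lt_min (by positivity) (by positivity)
  set ρ : ℝ := δ / C with hρ
  have hρpos : 0 < ρ := by positivity
  set M : ℝ := f xb + 1 + Mg + Mh - minP with hM
  set S : Set (↥V × ℝ) := {q | ∃ x w : E, g x ≠ ⊤ ∧ h w ≠ ⊤ ∧ w - x = (q.1 : E) ∧
    ((f x : ℝ) : EReal) + g x + h w ≤ ((q.2 + minP : ℝ) : EReal)} with hS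
  -- convexity of S
  have hSconv : Convex ℝ S := by
    rintro ⟨b1, r1⟩ ⟨x1, w1, hx1, hw1, hb1, hv1⟩ ⟨b2, r2⟩ ⟨x2, w2, hx2, hw2, hb2, hv2⟩
      θ μ hθ hμ hθμ
    have hA1 := real_of_ne hx1 (hg.ne_bot x1)
    have hA2 := real_of_ne hx2 (hg.ne_bot x2)
    have hB1 := real_of_ne hw1 (hh.ne_bot w1)
    have hB2 := real_of_ne hw2 (hh.ne_bot w2)
    set A1 := (g x1).toReal; set A2 := (g x2).toReal
    set B1 := (h w1).toReal; set B2 := (h w2).toReal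
    rw [hA1, hB1, ← EReal.coe_add, ← EReal.coe_add, EReal.coe_le_coe_iff] at hv1
    rw [hA2, hB2, ← EReal.coe_add, ← EReal.coe_add, EReal.coe_le_coe_iff] at hv2
    have hgc : g (θ • x1 + μ • x2) ≤ ((θ*A1 + μ*A2 : ℝ) : EReal) := by
      refine (hg.convex x1 x2 θ μ hθ hμ hθμ).trans (le_of_eq ?_)
      rw [hA1, hA2, ← EReal.coe_mul, ← EReal.coe_mul, ← EReal.coe_add]
    have hhc : h (θ • w1 + μ • w2) ≤ ((θ*B1 + μ*B2 : ℝ) : EReal) := by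
      refine (hh.convex w1 w2 θ μ hθ hμ hθμ).trans (le_of_eq ?_)
      rw [hB1, hB2, ← EReal.coe_mul, ← EReal.coe_mul, ← EReal.coe_add]
    have hfc' : f (θ • x1 + μ • x2) ≤ θ * f x1 + μ * f x2 := by
      have := hfconv.2 (Set.mem_univ x1) (Set.mem_univ x2) hθ hμ hθμ
      simpa [smul_eq_mul] using this
    refine ⟨θ • x1 + μ • x2, θ • w1 + μ • w2,
      (hgc.trans_lt (EReal.coe_lt_top _)).ne, (hhc.trans_lt (EReal.coe_lt_top _)).ne, ?_, ?_⟩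
    · have : ((θ • (b1, r1) + μ • (b2, r2) : ↥V × ℝ).1 : E) = θ • (b1 : E) + μ • (b2 : E) := by
        simp
      rw [this, ← hb1, ← hb2]
      module
    · have hsnd : (θ • (b1, r1) + μ • (b2, r2) : ↥V × ℝ).2 = θ * r1 + μ * r2 := by
        simp [smul_eq_mul]
      rw [hsnd]
      calc ((f (θ • x1 + μ • x2) : ℝ) : EReal) + g (θ • x1 + μ • x2) + h (θ • w1 + μ • w2)
          ≤ ((f (θ • x1 + μ • x2) : ℝ) : EReal) + ((θ*A1 + μ*A2 : ℝ) : EReal)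
            + ((θ*B1 + μ*B2 : ℝ) : EReal) := add_le_add (add_le_add le_rfl hgc) hhc
        _ = ((f (θ • x1 + μ • x2) + (θ*A1 + μ*A2) + (θ*B1 + μ*B2) : ℝ) : EReal) := by
            rw [← EReal.coe_add, ← EReal.coe_add]
        _ ≤ ((θ * r1 + μ * r2 + minP : ℝ) : EReal) := by
            rw [EReal.coe_le_coe_iff]
            have k1 := mul_le_mul_of_nonneg_left hv1 hθ
            have k2 := mul_le_mul_of_nonneg_left hv2 hμ
            have k3 : θ*minP + μ*minP = minP := by rw [← add_mul, hθμ, one_mul]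
            nlinarith [hfc', k1, k2, k3]
  -- the open box is inside S
  have hT0 : ∀ q : ↥V × ℝ, ‖q.1‖ < ρ → M < q.2 → q ∈ S := by
    rintro ⟨bq, r⟩ hbq hr
    set t : Fin n → ℝ := fun i => b.repr bq i with ht
    have htδ : ∀ i, |t i| ≤ δ := by
      intro i
      have h1 := hcoordb bq i
      have h2 : C * ‖bq‖ ≤ C * (δ / C) := mul_le_mul_of_nonneg_left hbq.le hCpos.le
      rw [mul_div_cancel₀ _ hCpos.ne'] at h2
      exact h1.trans h2
    set xg : E := ∑ i, t i • gvec i with hxg'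
    set xh : E := ∑ i, t i • hvec i with hxh'
    have hxgN : xg ∈ Ng := Submodule.sum_mem _ fun i _ => Ng.smul_mem _ (hgvec i)
    have hxhN : xh ∈ Nh := Submodule.sum_mem _ fun i _ => Nh.smul_mem _ (hhvec i)
    have hnormg : ‖xg‖ < εgf := by
      calc ‖xg‖ ≤ ∑ i, ‖t i • gvec i‖ := norm_sum_le _ _
        _ ≤ ∑ i, δ * ‖gvec i‖ := by
            refine Finset.sum_le_sum fun i _ => ?_
            rw [norm_smul, Real.norm_eq_abs]
            exact mul_le_mul_of_nonneg_right (htδ i) (norm_nonneg _)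
        _ = δ * (Kg - 1) := by rw [← Finset.mul_sum, hKg]; ring
        _ ≤ (εgf / (2 * Kg)) * (Kg - 1) := by
            refine mul_le_mul_of_nonneg_right (min_le_left _ _) ?_
            nlinarith [Finset.sum_nonneg (fun i (_ : i ∈ Finset.univ) => norm_nonneg (gvec i)), hKg]
        _ < εgf := by
            rw [div_mul_eq_mul_div, div_lt_iff₀ (by positivity)]
            nlinarith [hεgfpos, hKgpos]
    have hnormh : ‖xh‖ < εh := by
      calc ‖xh‖ ≤ ∑ i, ‖t i • hvec i‖ := norm_sum_le _ _
        _ ≤ ∑ i, δ * ‖hvec i‖ := by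
            refine Finset.sum_le_sum fun i _ => ?_
            rw [norm_smul, Real.norm_eq_abs]
            exact mul_le_mul_of_nonneg_right (htδ i) (norm_nonneg _)
        _ = δ * (Kh - 1) := by rw [← Finset.mul_sum, hKh]; ring
        _ ≤ (εh / (2 * Kh)) * (Kh - 1) := by
            refine mul_le_mul_of_nonneg_right (min_le_right _ _) ?_
            nlinarith [Finset.sum_nonneg (fun i (_ : i ∈ Finset.univ) => norm_nonneg (hvec i)), hKh]
        _ < εh := by
            rw [div_mul_eq_mul_div, div_lt_iff₀ (by positivity)]
            nlinarith [hεh, hKhpos]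
    have hgb := hMg xg hxgN (hnormg.trans_le (min_le_left _ _))
    have hhb := hMh xh hxhN hnormh
    have hfbb := hfb xg (hnormg.trans_le (min_le_right _ _))
    refine ⟨xb + xg, xb + xh, (hgb.trans_lt (EReal.coe_lt_top _)).ne,
      (hhb.trans_lt (EReal.coe_lt_top _)).ne, ?_, ?_⟩
    · have hrepr : (bq : E) = ∑ i, t i • (b i : E) := by
        have h1 := b.sum_repr bq
        have h2 := congrArg (V.subtype) h1
        simp only [map_sum, map_smul] at h2
        exact h2.symm
      have : xb + xh - (xb + xg) = ∑ i, t i • ((hvec i) - (gvec i)) := by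
        rw [hxg', hxh']
        rw [show xb + ∑ i, t i • hvec i - (xb + ∑ i, t i • gvec i)
            = ∑ i, t i • hvec i - ∑ i, t i • gvec i by abel, ← Finset.sum_sub_distrib]
        exact Finset.sum_congr rfl fun i _ => by rw [smul_sub]
      rw [this, hrepr]
      exact (Finset.sum_congr rfl fun i _ => by rw [hbvec i]).symm
    · calc ((f (xb + xg) : ℝ) : EReal) + g (xb + xg) + h (xb + xh)
          ≤ ((f xb + 1 : ℝ) : EReal) + (Mg : EReal) + (Mh : EReal) :=
            add_le_add (add_le_add (EReal.coe_le_coe_iff.mpr hfbb) hgb) hhb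
        _ = ((f xb + 1 + Mg + Mh : ℝ) : EReal) := by rw [← EReal.coe_add, ← EReal.coe_add]
        _ ≤ (((bq, r).2 + minP : ℝ) : EReal) := by
            rw [EReal.coe_le_coe_iff]
            simp only []
            rw [hM] at hr
            linarith
  -- separation
  set R : Set (↥V × ℝ) := {((0 : ↥V))} ×ˢ (Set.Iio (0:ℝ)) with hR
  have hRconv : Convex ℝ R := (convex_singleton _).prod (convex_Iio 0)
  have hdisj : Disjoint (interior S) R := by
    rw [Set.disjoint_left]
    intro q hqi hqR
    have hqS := interior_subset hqi
    obtain ⟨hq1, hq2⟩ := Set.mem_prod.mp hqR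
    obtain ⟨x, w, hx, hw, hbw, hval⟩ := hqS
    rw [Set.mem_singleton_iff] at hq1
    rw [hq1] at hbw
    have hwx : w = x := by
      have : w - x = 0 := by simpa using hbw
      exact sub_eq_zero.mp this
    rw [hwx] at hval
    have := (hmin x).trans hval
    rw [EReal.coe_le_coe_iff] at this
    have hq2' : q.2 < 0 := hq2
    linarith
  obtain ⟨φ, s₀, hφ1, hφ2⟩ := geometric_hahn_banach_open (hSconv.interior) isOpen_interior
    hRconv hdisj
  have hq0mem : ((0 : ↥V), M + 1) ∈ interior S := by
    have hopen : IsOpen ((Metric.ball (0 : ↥V) ρ) ×ˢ (Set.Ioi M)) :=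
      (Metric.isOpen_ball).prod isOpen_Ioi
    have hsub : (Metric.ball (0 : ↥V) ρ) ×ˢ (Set.Ioi M) ⊆ S := by
      rintro ⟨bq, r⟩ ⟨h1, h2⟩
      exact hT0 (bq, r) (by simpa using h1) h2
    refine interior_maximal hsub hopen ?_
    exact ⟨by simpa using hρpos, by simp⟩
  -- φ ≤ s₀ on all of S
  have hSle : ∀ q ∈ S, φ q ≤ s₀ := by
    intro q hq
    have htend : Filter.Tendsto (fun τ : ℝ => φ ((1 - τ) • ((0 : ↥V), M+1) + τ • q))
        (nhdsWithin 1 (Set.Iio 1)) (nhds (φ q)) := by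
      have hcont : Continuous fun τ : ℝ => φ ((1 - τ) • ((0 : ↥V), M+1) + τ • q) := by
        refine φ.continuous.comp ?_
        exact ((continuous_const.sub continuous_id).smul continuous_const).add
          (continuous_id.smul continuous_const)
      have := (hcont.tendsto 1).mono_left
        (nhdsWithin_le_nhds : nhdsWithin (1:ℝ) (Set.Iio 1) ≤ nhds 1)
      simpa using this
    refine le_of_tendsto htend ?_
    filter_upwards [Ioo_mem_nhdsLT_of_mem (Set.mem_Ioc.mpr ⟨zero_lt_one, le_refl 1⟩)] with τ hτ
    obtain ⟨hτ0, hτ1⟩ := hτ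
    refine (hφ1 _ (Convex.combo_interior_self_mem_interior hSconv hq0mem hq
      (by linarith : (0:ℝ) < 1 - τ) hτ0.le (by ring))).le
  set α : ℝ := φ ((0 : ↥V), 1) with hα
  have hαR : ∀ τ : ℝ, τ < 0 → s₀ ≤ τ * α := by
    intro τ hτ
    have hmem : ((0 : ↥V), τ) ∈ R := ⟨rfl, hτ⟩
    have := hφ2 _ hmem
    have hsmul : ((0 : ↥V), τ) = τ • ((0 : ↥V), (1:ℝ)) := by simp
    rw [hsmul, map_smul, smul_eq_mul] at this
    exact this
  have hs₀0 : s₀ ≤ 0 := by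
    refine le_of_forall_pos_le_add fun ε hε => ?_
    have hτ : -(ε / (|α| + 1)) < 0 := by
      have : 0 < ε / (|α| + 1) := by positivity
      linarith
    have h1 := hαR _ hτ
    have h2 : -(ε / (|α| + 1)) * α ≤ ε := by
      calc -(ε / (|α| + 1)) * α ≤ |(-(ε / (|α| + 1)) * α)| := le_abs_self _
        _ = (ε / (|α| + 1)) * |α| := by
            rw [abs_mul, abs_neg, abs_of_pos (by positivity : (0:ℝ) < ε / (|α| + 1))]
        _ ≤ ε := by
            rw [div_mul_eq_mul_div, div_le_iff₀ (by positivity)]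
            nlinarith [abs_nonneg α, hε]
    linarith
  have hαneg : α < 0 := by
    rcases lt_or_ge α 0 with hneg | hpos
    · exact hneg
    · exfalso
      have hq0 := hφ1 _ hq0mem
      have hdec0 : ((0 : ↥V), M + 1) = (M+1) • ((0 : ↥V), (1:ℝ)) := by simp
      rw [hdec0, map_smul, smul_eq_mul, ← hα] at hq0
      -- (M+1) * α < s₀ ≤ 0, so (M+1) * α < 0 ; also need contradiction when α ≥ 0:
      rcases eq_or_lt_of_le hpos with heq | hlt
      · rw [← heq, mul_zero] at hq0
        linarith
      · -- α > 0 : take τ → -∞ in hαR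
        have h1 := hαR (min (-1) ((s₀ - 1)/α)) (by
          have : min (-1) ((s₀ - 1)/α) ≤ -1 := min_le_left _ _
          linarith)
        have h2 : min (-1) ((s₀ - 1)/α) * α ≤ ((s₀ - 1)/α) * α :=
          mul_le_mul_of_nonneg_right (min_le_right _ _) hlt.le
        rw [div_mul_cancel₀ _ hlt.ne'] at h2
        linarith
  -- build the dual vector
  set T' : ↥V →L[ℝ] ℝ := (-α)⁻¹ • (φ.comp (ContinuousLinearMap.inl ℝ ↥V ℝ)) with hT'
  set u0 : ↥V := (InnerProductSpace.toDual ℝ ↥V).symm T' with hu0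
  refine ⟨(u0 : E), ?_⟩
  have hkey : ∀ q ∈ S, (⟪(q.1 : E), (u0 : E)⟫ : ℝ) ≤ q.2 := by
    intro q hq
    have h1 := hSle q hq
    have hdecq : q = ((q.1, 0) : ↥V × ℝ) + q.2 • ((0 : ↥V), (1:ℝ)) := by
      simp
    rw [hdecq, map_add, map_smul, smul_eq_mul] at h1
    have h2 : φ (q.1, 0) + q.2 * α ≤ 0 := le_trans h1 hs₀0
    have h3 : (φ.comp (ContinuousLinearMap.inl ℝ ↥V ℝ)) q.1 = φ (q.1, 0) := by
      simp [ContinuousLinearMap.inl_apply]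
    have h4 : T' q.1 = (-α)⁻¹ * φ (q.1, 0) := by
      rw [hT']; simp [h3]
    have h5 : (⟪u0, q.1⟫ : ℝ) = T' q.1 := by
      rw [hu0]
      exact InnerProductSpace.toDual_symm_apply
    have h6 : (⟪(q.1 : E), (u0 : E)⟫ : ℝ) = T' q.1 := by
      rw [← h5, real_inner_comm]
      exact (Submodule.coe_inner V u0 q.1).symm
    rw [h6, h4]
    rw [inv_mul_le_iff₀ (by linarith : (0:ℝ) < -α)]
    nlinarith [h2]
  intro x w
  by_cases hgx : g x = ⊤
  · have : ((f x : ℝ) : EReal) + g x + h w = ⊤ := by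
      rw [hgx, EReal.coe_add_top]
      exact EReal.top_add_of_ne_bot (hh.ne_bot w)
    rw [this]; exact le_top
  by_cases hhw : h w = ⊤
  · have : ((f x : ℝ) : EReal) + g x + h w = ⊤ := by
      rw [hhw]
      exact EReal.add_top_of_ne_bot (F_ne_bot hg.ne_bot x)
    rw [this]; exact le_top
  have hA := real_of_ne hgx (hg.ne_bot x)
  have hB := real_of_ne hhw (hh.ne_bot w)
  set A := (g x).toReal; set B := (h w).toReal
  have hxbg : xb ∈ affineSpan ℝ {x | g x ≠ ⊤} :=
    subset_affineSpan ℝ _ (intrinsicInterior_subset hxg)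
  have hxbh : xb ∈ affineSpan ℝ {x | h x ≠ ⊤} :=
    subset_affineSpan ℝ _ (intrinsicInterior_subset hxh)
  have hxmem : x - xb ∈ Ng := by
    rw [hNg]
    have hxdom : x ∈ {y : E | g y ≠ ⊤} := hgx
    have := AffineSubspace.vsub_mem_direction (subset_affineSpan ℝ _ hxdom) hxbg
    simpa using this
  have hwmem : w - xb ∈ Nh := by
    rw [hNh]
    have hwdom : w ∈ {y : E | h y ≠ ⊤} := hhw
    have := AffineSubspace.vsub_mem_direction (subset_affineSpan ℝ _ hwdom) hxbh
    simpa using this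
  have hwxV : w - x ∈ V := by
    have : w - x = (w - xb) - (x - xb) := by abel
    rw [this, hV]
    exact Submodule.sub_mem _ (Submodule.mem_sup_right hwmem) (Submodule.mem_sup_left hxmem)
  have hqS : ((⟨w - x, hwxV⟩ : ↥V), f x + A + B - minP) ∈ S := by
    refine ⟨x, w, hgx, hhw, rfl, ?_⟩
    rw [hA, hB, ← EReal.coe_add, ← EReal.coe_add, EReal.coe_le_coe_iff]
    simp only []
    linarith
  have := hkey _ hqS
  simp only [] at this
  rw [hA, hB, ← EReal.coe_add, ← EReal.coe_add, EReal.coe_le_coe_iff]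
  linarith [this]

end TOS
namespace TOS
variable {p : ℕ}
local notation "E" => EuclideanSpace ℝ (Fin p)

lemma strong_duality {f : E → ℝ} (hfconv : ConvexOn ℝ Set.univ f) {gradf : E → E}
    (hfdiff : ∀ y, HasGradientAt f (gradf y) y)
    {g h : E → EReal} (hg : ProperLscConvex g) (hh : ProperLscConvex h)
    (hqual : (intrinsicInterior ℝ {x | g x ≠ ⊤} ∩ intrinsicInterior ℝ {x | h x ≠ ⊤}).Nonempty)
    {minP : ℝ} (hmin : ∀ x', (minP : EReal) ≤ ((f x' : ℝ) : EReal) + g x' + h x') :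
    ∃ u' : E, fconj (fun y => ((f y : ℝ) : EReal) + g y) (-u') + fconj h u'
      ≤ ((-minP : ℝ) : EReal) := by
  obtain ⟨u', hu'⟩ := exists_dual_minorant hfconv hfdiff hg hh hqual hmin
  refine ⟨u', ?_⟩
  have step1 : ∀ x w : E,
      ((((⟪x, -u'⟫ : ℝ)) : EReal) - (((f x : ℝ) : EReal) + g x))
        + ((((⟪w, u'⟫ : ℝ)) : EReal) - h w) ≤ ((-minP : ℝ) : EReal) := by
    intro x w
    by_cases hgx : g x = ⊤
    · have hFx : ((f x : ℝ) : EReal) + g x = ⊤ := by rw [hgx, EReal.coe_add_top]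
      rw [hFx, EReal.sub_top, EReal.bot_add]; exact bot_le
    by_cases hhw : h w = ⊤
    · rw [hhw, EReal.sub_top, EReal.add_bot]; exact bot_le
    have hA := real_of_ne hgx (hg.ne_bot x)
    have hB := real_of_ne hhw (hh.ne_bot w)
    have hk := hu' x w
    rw [hA, hB, ← EReal.coe_add, ← EReal.coe_add, EReal.coe_le_coe_iff] at hk
    rw [hA, hB, ← EReal.coe_add, ← EReal.coe_sub, ← EReal.coe_sub, ← EReal.coe_add,
      EReal.coe_le_coe_iff]
    have hi1 : (⟪x, -u'⟫ : ℝ) = -⟪x, u'⟫ := by rw [inner_neg_right]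
    have hi2 : (⟪w - x, u'⟫ : ℝ) = ⟪w, u'⟫ - ⟪x, u'⟫ := by rw [inner_sub_left]
    rw [hi1]
    linarith [hk, hi2.le, hi2.ge]
  have key2 : ∀ (cx : ℝ) (x : E), ((f x : ℝ) : EReal) + g x = (cx : EReal) →
      fconj h u' ≤ ((-minP - (⟪x, -u'⟫ - cx) : ℝ) : EReal) := by
    intro cx x hFx
    refine iSup_le fun w => ?_
    have h1 := step1 x w
    rw [hFx, ← EReal.coe_sub, add_comm] at h1
    exact ereal_add_real_le h1
  obtain ⟨xb, hxg, hxh⟩ := hqual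
  have hgxb : g xb ≠ ⊤ := intrinsicInterior_subset hxg
  have hhxb : h xb ≠ ⊤ := intrinsicInterior_subset hxh
  have hAb := real_of_ne hgxb (hg.ne_bot xb)
  have hBb := real_of_ne hhxb (hh.ne_bot xb)
  have hFxb : ((f xb : ℝ) : EReal) + g xb = ((f xb + (g xb).toReal : ℝ) : EReal) := by
    conv_lhs => rw [hAb]
    rw [← EReal.coe_add]
  have hchle := key2 _ xb hFxb
  have hchb : ((⟪xb, u'⟫ - (h xb).toReal : ℝ) : EReal) ≤ fconj h u' := by
    have := term_le_fconj h u' xb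
    rwa [hBb, ← EReal.coe_sub] at this
  have hcht : fconj h u' ≠ ⊤ := (hchle.trans_lt (EReal.coe_lt_top _)).ne
  have hchbot : fconj h u' ≠ ⊥ := by
    intro hc
    rw [hc, le_bot_iff] at hchb
    exact EReal.coe_ne_bot _ hchb
  have hchR := real_of_ne hcht hchbot
  set rh := (fconj h u').toReal with hrh
  have hcF : fconj (fun y => ((f y : ℝ) : EReal) + g y) (-u')
      ≤ ((-minP - rh : ℝ) : EReal) := by
    refine iSup_le fun x => ?_
    simp only []
    by_cases hFx : ((f x : ℝ) : EReal) + g x = ⊤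
    · rw [hFx, EReal.sub_top]; exact bot_le
    have hFr := real_of_ne hFx (F_ne_bot hg.ne_bot x)
    rw [hFr, ← EReal.coe_sub, EReal.coe_le_coe_iff]
    have h2 := key2 _ x hFr
    rw [hchR, EReal.coe_le_coe_iff] at h2
    linarith [h2]
  calc fconj (fun y => ((f y : ℝ) : EReal) + g y) (-u') + fconj h u'
      ≤ ((-minP - rh : ℝ) : EReal) + ((rh : ℝ) : EReal) :=
        add_le_add hcF (le_of_eq hchR)
    _ = ((-minP : ℝ) : EReal) := by rw [← EReal.coe_add]; norm_num

end TOS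
namespace TOS
variable {p : ℕ}
local notation "E" => EuclideanSpace ℝ (Fin p)

lemma ereal_sum_split {a b : EReal} {a0 b0 : ℝ} (ha : (a0 : EReal) ≤ a) (hb : (b0 : EReal) ≤ b)
    (hs : a + b ≤ ((a0 + b0 : ℝ) : EReal)) : a = (a0 : EReal) ∧ b = (b0 : EReal) := by
  have hbb : b ≠ ⊥ := fun hbot => by rw [hbot, le_bot_iff] at hb; exact EReal.coe_ne_bot _ hb
  have hab : a ≠ ⊥ := fun hbot => by rw [hbot, le_bot_iff] at ha; exact EReal.coe_ne_bot _ ha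
  have hat : a ≠ ⊤ := by
    intro htop
    rw [htop, EReal.top_add_of_ne_bot hbb] at hs
    exact (not_le.mpr (EReal.coe_lt_top _)) hs
  have hbt : b ≠ ⊤ := by
    intro htop
    rw [htop, EReal.add_top_of_ne_bot hab] at hs
    exact (not_le.mpr (EReal.coe_lt_top _)) hs
  have hA := real_of_ne hat hab
  have hB := real_of_ne hbt hbb
  rw [hA, hB, ← EReal.coe_add, EReal.coe_le_coe_iff] at hs
  rw [hA] at ha; rw [hB] at hb
  rw [EReal.coe_le_coe_iff] at ha hb
  rw [hA, hB]
  constructor <;> · rw [EReal.coe_eq_coe_iff]; linarith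

end TOS

open TOS

/-- fixed points of the generalized three operator splitting:
`Fix(G_γ) = 𝒫* + γ D 𝒟*`, the weighted Minkowski sum of the primal and dual solution sets. -/
theorem fixed_point_characterization
    (f : EuclideanSpace ℝ (Fin p) → ℝ)
    (hfconv : ConvexOn ℝ Set.univ f)
    (gradf : EuclideanSpace ℝ (Fin p) → EuclideanSpace ℝ (Fin p))
    (hfdiff : ∀ x, HasGradientAt f (gradf x) x)
    (Lf : ℝ) (hflip : ∀ x y, ‖gradf x - gradf y‖ ≤ Lf * ‖x - y‖)
    (g h : EuclideanSpace ℝ (Fin p) → EReal)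
    (hg : ProperLscConvex g) (hh : ProperLscConvex h)
    (hqual : (intrinsicInterior ℝ {x | g x ≠ ⊤} ∩ intrinsicInterior ℝ {x | h x ≠ ⊤}).Nonempty)
    (d : Fin p → ℝ) (hd : ∀ j, 0 < d j)
    (Dop : EuclideanSpace ℝ (Fin p) → EuclideanSpace ℝ (Fin p))
    (hDop : ∀ v j, Dop v j = d j * v j)
    (γ : ℝ) (hγ : 0 < γ)
    (proxg proxh : EuclideanSpace ℝ (Fin p) → EuclideanSpace ℝ (Fin p))
    (hproxg : ∀ x, IsProxDinv d γ g x (proxg x))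
    (hproxh : ∀ x, IsProxDinv d γ h x (proxh x))
    -- the operator G_γ
    (G : EuclideanSpace ℝ (Fin p) → EuclideanSpace ℝ (Fin p))
    (hG : ∀ y, G y = y - proxh y + proxg (2 • proxh y - y - γ • Dop (gradf (proxh y))))
    -- primal and dual objectives and their solution sets
    (P : EuclideanSpace ℝ (Fin p) → EReal)
    (hP : ∀ x, P x = ((f x : ℝ) : EReal) + g x + h x)
    (Dobj : EuclideanSpace ℝ (Fin p) → EReal)
    (hDobj : ∀ u, Dobj u = fconj (fun x => ((f x : ℝ) : EReal) + g x) (-u) + fconj h u)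
    (Pstar Dstar : Set (EuclideanSpace ℝ (Fin p)))
    (hPstar : Pstar = {x | ∀ x', P x ≤ P x'})
    (hDstar : Dstar = {u | ∀ u', Dobj u ≤ Dobj u'}) :
    {y | G y = y} = {y | ∃ x u, x ∈ Pstar ∧ u ∈ Dstar ∧ y = x + γ • Dop u} := by
  have hγd : ∀ j, γ * d j ≠ 0 := fun j => by
    have := hd j; positivity
  ext y
  simp only [Set.mem_setOf_eq]
  constructor
  · -- fixed point ⇒ primal/dual optimal pair
    intro hy
    set z := proxh y with hz
    have hGy := hG y
    rw [hy] at hGy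
    have hfix : proxg (2 • z - y - γ • Dop (gradf z)) = z := by
      have h1 : y - z + proxg (2 • z - y - γ • Dop (gradf z)) = y := hGy.symm
      have h2 := congrArg (fun v => v - (y - z)) h1
      rw [add_sub_cancel_left] at h2
      rw [h2, sub_sub_cancel]
    have hsubh : Subg h z (qvec d γ y z) := subg_of_prox hγ hh (hproxh y)
    have hpg := hproxg (2 • z - y - γ • Dop (gradf z))
    rw [hfix] at hpg
    have hsubg0 : Subg g z (qvec d γ (2 • z - y - γ • Dop (gradf z)) z) :=
      subg_of_prox hγ hg hpg
    set u : EuclideanSpace ℝ (Fin p) := qvec d γ y z with hu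
    have hqA : qvec d γ (2 • z - y - γ • Dop (gradf z)) z = -u - gradf z := by
      ext j
      have h2z : (2 • z : EuclideanSpace ℝ (Fin p)) j = z j + z j := by
        rw [two_smul]; simp [PiLp.add_apply]
      have hd1 : d j ≠ 0 := (hd j).ne'
      have hd2 : γ ≠ 0 := hγ.ne'
      simp only [qvec, hu, PiLp.sub_apply, PiLp.smul_apply, PiLp.neg_apply, smul_eq_mul,
        hDop, h2z, WithLp.ofLp_toLp]
      field_simp
      ring
    rw [hqA] at hsubg0
    obtain ⟨hP1, hD1⟩ := pair_optimal hfconv hfdiff hg hh hsubh hsubg0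
    refine ⟨z, u, ?_, ?_, ?_⟩
    · rw [hPstar]
      intro x'
      rw [hP z, hP x']
      exact hP1 x'
    · rw [hDstar]
      intro u''
      rw [hDobj u, hDobj u'']
      exact hD1 u''
    · ext j
      have hd1 : d j ≠ 0 := (hd j).ne'
      have hd2 : γ ≠ 0 := hγ.ne'
      simp only [PiLp.add_apply, PiLp.smul_apply, smul_eq_mul, hDop, hu, qvec, WithLp.ofLp_toLp]
      field_simp
      ring
  · -- optimal pair ⇒ fixed point
    rintro ⟨x, u, hxP, huD, rfl⟩
    rw [hPstar] at hxP
    rw [hDstar] at huD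
    obtain ⟨xb, hxgq, hxhq⟩ := hqual
    have hgxb : g xb ≠ ⊤ := intrinsicInterior_subset hxgq
    have hhxb : h xb ≠ ⊤ := intrinsicInterior_subset hxhq
    have hPxbt : P xb ≠ ⊤ := by
      rw [hP xb, real_of_ne hgxb (hg.ne_bot xb), real_of_ne hhxb (hh.ne_bot xb),
        ← EReal.coe_add, ← EReal.coe_add]
      exact EReal.coe_ne_top _
    have hPxt : P x ≠ ⊤ := fun htop => hPxbt (top_le_iff.mp (htop ▸ hxP xb))
    have hgx : g x ≠ ⊤ := by
      intro hc
      apply hPxt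
      rw [hP x, hc, EReal.coe_add_top]
      exact EReal.top_add_of_ne_bot (hh.ne_bot x)
    have hhx : h x ≠ ⊤ := by
      intro hc
      apply hPxt
      rw [hP x, hc]
      exact EReal.add_top_of_ne_bot (F_ne_bot hg.ne_bot x)
    have hA := real_of_ne hgx (hg.ne_bot x)
    have hB := real_of_ne hhx (hh.ne_bot x)
    set A := (g x).toReal
    set B := (h x).toReal
    set minP : ℝ := f x + A + B with hminP
    have hPx : P x = ((minP : ℝ) : EReal) := by
      rw [hP x]
      conv_lhs => rw [hA, hB]
      rw [← EReal.coe_add, ← EReal.coe_add]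
    have hmin : ∀ x', (minP : EReal) ≤ ((f x' : ℝ) : EReal) + g x' + h x' := by
      intro x'
      have := hxP x'
      rw [hPx, hP x'] at this
      exact this
    obtain ⟨u'', hu''⟩ := strong_duality hfconv hfdiff hg hh ⟨xb, hxgq, hxhq⟩ hmin
    have hDu : fconj (fun y => ((f y : ℝ) : EReal) + g y) (-u) + fconj h u
        ≤ ((-minP : ℝ) : EReal) := by
      have h1 := huD u''
      rw [hDobj u, hDobj u''] at h1
      exact h1.trans hu''
    -- Fenchel-Young split
    have hFx : ((f x : ℝ) : EReal) + g x = ((f x + A : ℝ) : EReal) := by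
      conv_lhs => rw [hA]
      rw [← EReal.coe_add]
    have ht1 : ((⟪x, -u⟫ - (f x + A) : ℝ) : EReal)
        ≤ fconj (fun y => ((f y : ℝ) : EReal) + g y) (-u) := by
      have := term_le_fconj (fun y => ((f y : ℝ) : EReal) + g y) (-u) x
      rwa [hFx, ← EReal.coe_sub] at this
    have ht2 : ((⟪x, u⟫ - B : ℝ) : EReal) ≤ fconj h u := by
      have := term_le_fconj h u x
      rwa [hB, ← EReal.coe_sub] at this
    have hsum : fconj (fun y => ((f y : ℝ) : EReal) + g y) (-u) + fconj h u
        ≤ (((⟪x, -u⟫ - (f x + A)) + (⟪x, u⟫ - B) : ℝ) : EReal) := by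
      refine hDu.trans (le_of_eq ?_)
      rw [EReal.coe_eq_coe_iff]
      have hin : (⟪x, -u⟫ : ℝ) = -⟪x, u⟫ := by rw [inner_neg_right]
      rw [hin, hminP]; ring
    obtain ⟨hFY1, hFY2⟩ := ereal_sum_split ht1 ht2 hsum
    have hsh : Subg h x u := by
      refine subg_of_fconj_le hh.ne_bot hB ?_
      rw [hFY2]
      conv_rhs => rw [hB]
      rw [← EReal.coe_sub]
    have hsF : Subg (fun y => ((f y : ℝ) : EReal) + g y) x (-u) := by
      refine subg_of_fconj_le (F_ne_bot hg.ne_bot) hFx ?_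
      rw [hFY1]
      conv_rhs => rw [hFx]
      rw [← EReal.coe_sub]
    have hsg : Subg g x (-u - gradf x) := subg_sub_grad hfdiff hg hsF hgx
    -- build the fixed point
    have hq1 : qvec d γ (x + γ • Dop u) x = u := by
      ext j
      have hd1 : d j ≠ 0 := (hd j).ne'
      have hd2 : γ ≠ 0 := hγ.ne'
      simp only [qvec, PiLp.add_apply, PiLp.smul_apply, smul_eq_mul, hDop, WithLp.ofLp_toLp]
      field_simp
      ring
    have hproxh_eq : proxh (x + γ • Dop u) = x := by
      refine prox_unique hd hγ hh ?_ (hproxh _)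
      rw [hq1]; exact hsh
    have hq2 : qvec d γ (2 • x - (x + γ • Dop u) - γ • Dop (gradf x)) x = -u - gradf x := by
      ext j
      have h2x : (2 • x : EuclideanSpace ℝ (Fin p)) j = x j + x j := by
        rw [two_smul]; simp [PiLp.add_apply]
      have hd1 : d j ≠ 0 := (hd j).ne'
      have hd2 : γ ≠ 0 := hγ.ne'
      simp only [qvec, PiLp.sub_apply, PiLp.add_apply, PiLp.smul_apply, PiLp.neg_apply,
        smul_eq_mul, hDop, h2x, WithLp.ofLp_toLp]
      field_simp
      ring
    have hproxg_eq : proxg (2 • x - (x + γ • Dop u) - γ • Dop (gradf x)) = x := by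
      refine prox_unique hd hγ hg ?_ (hproxg _)
      rw [hq2]; exact hsg
    rw [hG, hproxh_eq, hproxg_eq]
    abel
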